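/- For pattern matrices M and N of the same dimensions, the Minkowski sum of their pattern classes equals the pattern class of their sum: P(M) + P(N) = P(M + N). -/

import Mathlib

inductive PSym | zero | star | any
deriving DecidableEq

namespace PSym

def symAdd : PSym → PSym → PSym
  | zero, x => x
  | x, zero => x
  | _, _ => any

def symMul : PSym → PSym → PSym
  | zero, _ => zero
  | _, zero => zero
  | star, star => star
  | _, _ => any

instance : Zero PSym := ⟨zero⟩
instance : Add PSym := ⟨symAdd⟩

instance : AddCommMonoid PSym where
  add_assoc a b c := by cases a <;> cases b <;> cases c <;> rfl
  zero_add a := by cases a <;> rfl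
  add_zero a := by cases a <;> rfl
  add_comm a b := by cases a <;> cases b <;> rfl
  nsmul := nsmulRec

end PSym

/-- The pattern class of a pattern matrix. -/
def PatClass {p q : Type*} (M : Matrix p q PSym) : Set (Matrix p q ℝ) :=
  {A | ∀ i j, (M i j = PSym.zero → A i j = 0) ∧ (M i j = PSym.star → A i j ≠ 0)}

/-- Product of pattern matrices. -/
def patMul {p q s : ℕ} (M : Matrix (Fin p) (Fin q) PSym) (N : Matrix (Fin q) (Fin s) PSym) :
    Matrix (Fin p) (Fin s) PSym :=
  fun i j => ∑ k, PSym.symMul (M i k) (N k j)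

/-- A 1×q pattern vector `M` is independent of an r×q pattern matrix `N`. -/
def Independent {q r : ℕ} (M : Matrix (Fin 1) (Fin q) PSym) (N : Matrix (Fin r) (Fin q) PSym) : Prop :=
  ∀ M₀ ∈ PatClass M, ∀ N₀ ∈ PatClass N, ∀ (z₁ : ℝ) (z₂ : Fin r → ℝ),
    (∀ j, z₁ * M₀ 0 j + ∑ i, z₂ i * N₀ i j = 0) → z₁ = 0

@[simp] lemma PSym.add_def (a b : PSym) : a + b = PSym.symAdd a b := rfl

noncomputable def pickA : PSym → PSym → ℝ → ℝ
  | PSym.zero, _, _ => 0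
  | PSym.star, PSym.zero, x => x
  | PSym.star, PSym.star, x => if x = 1 then 2 else 1
  | PSym.star, PSym.any, _ => 1
  | PSym.any, PSym.star, x => x - 1
  | PSym.any, _, x => x

/-- For pattern matrices `M` and `N` of the same dimensions,
`P(M) + P(N) = P(M + N)` (Minkowski sum of pattern classes). -/
theorem pattern_class_add {p q : ℕ} (M N : Matrix (Fin p) (Fin q) PSym) :
    {X : Matrix (Fin p) (Fin q) ℝ | ∃ A ∈ PatClass M, ∃ B ∈ PatClass N, X = A + B} =
      PatClass (fun i j => M i j + N i j) := by
  ext X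
  simp only [Set.mem_setOf_eq, PatClass]
  constructor
  · rintro ⟨A, hA, B, hB, rfl⟩ i j
    obtain ⟨hA0, hAs⟩ := hA i j
    obtain ⟨hB0, hBs⟩ := hB i j
    have hadd : (A + B) i j = A i j + B i j := rfl
    cases hM : M i j <;> cases hN : N i j <;>
      simp_all [hadd, PSym.symAdd]
  · intro hX
    refine ⟨fun i j => pickA (M i j) (N i j) (X i j), ?_,
      fun i j => X i j - pickA (M i j) (N i j) (X i j), ?_, ?_⟩
    · intro i j
      obtain ⟨h0, hs⟩ := hX i j
      cases hM : M i j <;> cases hN : N i j <;>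
        simp_all [pickA, PSym.symAdd, sub_eq_zero] <;>
        split <;> simp_all <;> norm_num
    · intro i j
      obtain ⟨h0, hs⟩ := hX i j
      cases hM : M i j <;> cases hN : N i j <;>
        simp_all [pickA, PSym.symAdd, sub_eq_zero] <;>
        split <;> simp_all <;> norm_num
    · ext i j
      show X i j = pickA (M i j) (N i j) (X i j) + (X i j - pickA (M i j) (N i j) (X i j))
      ring
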